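/- Let p be a prime, n ≥ 1, and a_1, …, a_n ∈ ℤ[1/p] with v_p(a_1) < 0 and v_p(a_1) ≤ v_p(a_j) for all 2 ≤ j ≤ n. Then the polynomial X^n − a_1X^{n−1} − ⋯ − a_n has a root β in ℚ_p with |β|_p = |a_1|_p > 1. (In particular, every Pisot–Chabauty or Salem–Chabauty number lies in ℚ_p.) -/

import Mathlib

open Polynomial Finset IsUltrametricDist


/-- Let `a_1, …, a_n ∈ ℤ[1/p]` with `v_p(a_1) < 0` and
`v_p(a_1) ≤ v_p(a_j)` for `2 ≤ j ≤ n`.  Then `X^n − a_1 X^(n−1) − ⋯ − a_n` has a root `β ∈ ℚ_p`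
with `|β|_p = |a_1|_p > 1`.  (In particular every Pisot–Chabauty or Salem–Chabauty number lies
in `ℚ_p`.) -/
theorem padic_root_exists (p : ℕ) [Fact p.Prime] (n : ℕ) (hn : 1 ≤ n)
    (a : ℕ → ℚ)
    (haZ : ∀ j, 1 ≤ j → j ≤ n → ∃ m : ℤ, ∃ k : ℕ, a j = (m : ℚ) / (p : ℚ) ^ k)
    (ha1 : padicValRat p (a 1) < 0)
    (haj : ∀ j, 2 ≤ j → j ≤ n → padicValRat p (a 1) ≤ padicValRat p (a j)) :
    ∃ β : ℚ_[p], β ^ n = ∑ j ∈ Finset.Icc 1 n, ((a j : ℚ) : ℚ_[p]) * β ^ (n - j) ∧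
      ‖β‖ = ‖((a 1 : ℚ) : ℚ_[p])‖ ∧ 1 < ‖β‖ := by
  have hp1 : (1:ℚ) < p := by exact_mod_cast (Fact.out : p.Prime).one_lt
  have ha1ne : a 1 ≠ 0 := by
    intro h; rw [h] at ha1; simp at ha1
  set q : ℚ_[p] := ((a 1 : ℚ) : ℚ_[p]) with hq
  have hqne : q ≠ 0 := by
    simpa [hq] using (Rat.cast_ne_zero (α := ℚ_[p])).2 ha1ne
  -- norm of a j as zpow
  have hnorm : ∀ x : ℚ, x ≠ 0 → ‖((x : ℚ) : ℚ_[p])‖ = (((p:ℚ)^(-padicValRat p x) : ℚ) : ℝ) := by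
    intro x hx
    rw [Padic.eq_padicNorm, padicNorm.eq_zpow_of_nonzero hx]
  have hA : 1 < ‖q‖ := by
    rw [hq, hnorm _ ha1ne]
    have : (1:ℚ) < (p:ℚ)^(-padicValRat p (a 1)) := by
      apply one_lt_zpow₀ hp1; omega
    exact_mod_cast this
  have hApos : 0 < ‖q‖ := lt_trans one_pos hA
  have hle : ∀ j, 2 ≤ j → j ≤ n → ‖((a j : ℚ) : ℚ_[p])‖ ≤ ‖q‖ := by
    intro j h2 hjn
    by_cases hj0 : a j = 0
    · simp only [hj0, Rat.cast_zero, norm_zero]; exact le_of_lt hApos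
    · rw [hq, hnorm _ ha1ne, hnorm _ hj0]
      have : (p:ℚ)^(-padicValRat p (a j)) ≤ (p:ℚ)^(-padicValRat p (a 1)) :=
        zpow_le_zpow_right₀ (le_of_lt hp1) (neg_le_neg (haj j h2 hjn))
      exact_mod_cast this
  -- the rescaled coefficients
  set c : ℕ → ℚ_[p] := fun j => ((a j : ℚ) : ℚ_[p]) / q ^ j with hc
  have hc1 : c 1 = 1 := by simp [hc, hq, pow_one, div_self hqne, ha1ne]
  have hcnorm : ∀ j, ‖c j‖ = ‖((a j : ℚ) : ℚ_[p])‖ / ‖q‖ ^ j := by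
    intro j; simp [hc, norm_div, norm_pow]
  have hclt : ∀ j, 2 ≤ j → j ≤ n → ‖c j‖ ≤ ‖q‖⁻¹ := by
    intro j h2 hjn
    rw [hcnorm, div_le_iff₀ (pow_pos hApos j)]
    calc ‖((a j : ℚ) : ℚ_[p])‖ ≤ ‖q‖ := hle j h2 hjn
      _ = ‖q‖⁻¹ * ‖q‖ ^ 2 := by field_simp [sq]
      _ ≤ ‖q‖⁻¹ * ‖q‖ ^ j := by
          exact mul_le_mul_of_nonneg_left (pow_le_pow_right₀ (le_of_lt hA) h2)
            (inv_nonneg.2 hApos.le)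
  have hcle1 : ∀ j, 1 ≤ j → j ≤ n → ‖c j‖ ≤ 1 := by
    intro j h1 hjn
    rcases eq_or_lt_of_le h1 with h|h
    · rw [← h, hc1]; simp
    · exact le_trans (hclt j h hjn) (by
        rw [inv_le_one_iff₀]; right; exact le_of_lt hA)
  -- integral coefficients
  set c' : ℕ → ℚ_[p] := fun j => if 1 ≤ j ∧ j ≤ n then c j else 0 with hc'
  have hc'le : ∀ j, ‖c' j‖ ≤ 1 := by
    intro j
    by_cases h : 1 ≤ j ∧ j ≤ n
    · simp only [hc', if_pos h]; exact hcle1 j h.1 h.2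
    · simp [hc', if_neg h]
  set b : ℕ → ℤ_[p] := fun j => ⟨c' j, hc'le j⟩ with hb
  have hbcoe : ∀ j ∈ Finset.Icc 1 n, ((b j : ℚ_[p])) = c j := by
    intro j hj
    simp only [Finset.mem_Icc] at hj
    simp [hb, hc', hj.1, hj.2]
  have hbnorm : ∀ j, ‖b j‖ = ‖c' j‖ := fun j => rfl
  have hb1 : b 1 = 1 := by
    apply Subtype.ext
    simp [hb, hc', hn, hc1]
  have hblt : ∀ j ∈ Finset.Icc 2 n, ‖b j‖ ≤ ‖q‖⁻¹ := by
    intro j hj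
    simp only [Finset.mem_Icc] at hj
    rw [hbnorm]
    simp only [hc', if_pos (⟨le_trans one_le_two hj.1, hj.2⟩ : 1 ≤ j ∧ j ≤ n)]
    exact hclt j hj.1 hj.2
  have hinvlt : ‖q‖⁻¹ < 1 := by rw [inv_lt_one_iff₀]; right; exact hA
  have hinvnonneg : (0:ℝ) ≤ ‖q‖⁻¹ := inv_nonneg.2 (le_of_lt hApos)
  -- the polynomial
  set F : Polynomial ℤ_[p] := X ^ n - ∑ j ∈ Finset.Icc 1 n, C (b j) * X ^ (n - j) with hF
  have hIcc : Finset.Icc 1 n = insert 1 (Finset.Icc 2 n) := by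
    ext x; simp [Finset.mem_Icc, Finset.mem_insert]; omega
  have h1notin : (1:ℕ) ∉ Finset.Icc 2 n := by simp
  -- eval at 1
  have hF1 : F.eval 1 = -(∑ j ∈ Finset.Icc 2 n, b j) := by
    rw [hF]
    simp only [eval_sub, eval_pow, eval_X, one_pow, eval_finset_sum, eval_mul, eval_C]
    rw [hIcc, Finset.sum_insert h1notin, hb1]
    ring
  have hF1norm : ‖F.eval 1‖ < 1 := by
    rw [hF1, norm_neg]
    exact lt_of_le_of_lt (norm_sum_le_of_forall_le_of_nonneg hinvnonneg hblt) hinvlt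
  -- derivative
  have hFd : F.derivative.eval 1 = 1 - ∑ j ∈ Finset.Icc 2 n, b j * (n - j : ℕ) := by
    rw [hF]
    simp only [derivative_sub, derivative_pow, derivative_X, derivative_sum, derivative_C_mul,
      eval_sub, eval_finset_sum, eval_mul, eval_pow, eval_X, eval_C, eval_natCast,
      mul_one, one_pow, derivative_X_pow]
    rw [hIcc, Finset.sum_insert h1notin, hb1]
    have : ((n:ℤ_[p]) - ((n-1:ℕ):ℤ_[p])) = 1 := by
      have : ((n-1:ℕ):ℤ_[p]) = (n:ℤ_[p]) - 1 := by
        push_cast [Nat.cast_sub hn]; ring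
      rw [this]; ring
    push_cast
    ring_nf
    rw [Nat.cast_sub hn]
    push_cast
    ring
  have hTle : ‖∑ j ∈ Finset.Icc 2 n, b j * ((n - j : ℕ) : ℤ_[p])‖ ≤ ‖q‖⁻¹ := by
    apply norm_sum_le_of_forall_le_of_nonneg hinvnonneg
    intro j hj
    calc ‖b j * ((n - j : ℕ) : ℤ_[p])‖ = ‖b j‖ * ‖((n - j : ℕ) : ℤ_[p])‖ :=
          norm_mul _ _
      _ ≤ ‖q‖⁻¹ * 1 := by
          apply mul_le_mul (hblt j hj) (PadicInt.norm_le_one _) (norm_nonneg _) hinvnonneg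
      _ = ‖q‖⁻¹ := mul_one _
  have hT1 : ‖∑ j ∈ Finset.Icc 2 n, b j * ((n - j : ℕ) : ℤ_[p])‖ < 1 :=
    lt_of_le_of_lt hTle hinvlt
  have hFdnorm : ‖F.derivative.eval 1‖ = 1 := by
    rw [hFd, sub_eq_add_neg, PadicInt.norm_add_eq_max_of_ne, norm_one, norm_neg]
    · exact max_eq_left (le_of_lt hT1)
    · rw [norm_one, norm_neg]; exact (ne_of_gt hT1)
  obtain ⟨z, hz, hzdist, -, -⟩ := hensels_lemma (p := p) (F := F) (a := 1)
    (by rw [coe_aeval_eq_eval, hFdnorm, one_pow]; exact hF1norm)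
  have hzdist' : ‖z - 1‖ < 1 := by rwa [coe_aeval_eq_eval, hFdnorm] at hzdist
  have hznorm : ‖z‖ = 1 := by
    have hzz : z = 1 + (z - 1) := by ring
    rw [hzz, PadicInt.norm_add_eq_max_of_ne, norm_one]
    · exact max_eq_left (le_of_lt hzdist')
    · rw [norm_one]; exact (ne_of_gt hzdist')
  -- transfer the root equation to ℚ_p
  have hzeq : (z : ℚ_[p]) ^ n = ∑ j ∈ Finset.Icc 1 n, c j * (z : ℚ_[p]) ^ (n - j) := by
    have h0 : z ^ n - ∑ j ∈ Finset.Icc 1 n, b j * z ^ (n - j) = 0 := by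
      have := hz
      rw [hF] at this
      simpa only [coe_aeval_eq_eval, eval_sub, eval_pow, eval_X, eval_finset_sum, eval_mul, eval_C] using this
    have h1 : z ^ n = ∑ j ∈ Finset.Icc 1 n, b j * z ^ (n - j) := by
      linear_combination h0
    have h2 := congrArg (PadicInt.Coe.ringHom (p := p)) h1
    simp only [map_pow, map_sum, map_mul] at h2
    have h3 : ∀ j ∈ Finset.Icc 1 n,
        (PadicInt.Coe.ringHom (p := p)) (b j) * (PadicInt.Coe.ringHom (p := p)) z ^ (n - j)
          = c j * (z : ℚ_[p]) ^ (n - j) := by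
      intro j hj
      have : (PadicInt.Coe.ringHom (p := p)) (b j) = c j := hbcoe j hj
      rw [this]; rfl
    rw [Finset.sum_congr rfl h3] at h2
    exact h2
  refine ⟨q * z, ?_, ?_, ?_⟩
  · calc (q * (z : ℚ_[p])) ^ n = q ^ n * (z : ℚ_[p]) ^ n := mul_pow _ _ _
      _ = q ^ n * ∑ j ∈ Finset.Icc 1 n, c j * (z : ℚ_[p]) ^ (n - j) := by rw [hzeq]
      _ = ∑ j ∈ Finset.Icc 1 n, q ^ n * (c j * (z : ℚ_[p]) ^ (n - j)) := Finset.mul_sum _ _ _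
      _ = ∑ j ∈ Finset.Icc 1 n, ((a j : ℚ) : ℚ_[p]) * (q * (z : ℚ_[p])) ^ (n - j) := by
          apply Finset.sum_congr rfl
          intro j hj
          simp only [Finset.mem_Icc] at hj
          have hqn : q ^ j * q ^ (n - j) = q ^ n := pow_mul_pow_sub q hj.2
          rw [mul_pow, hc]
          field_simp [← hqn]
          rw [← hqn]; ring
  · rw [Padic.padicNormE.mul, PadicInt.padic_norm_e_of_padicInt, hznorm, mul_one]
  · rw [Padic.padicNormE.mul, PadicInt.padic_norm_e_of_padicInt, hznorm, mul_one]
    exact hA
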